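/- arXiv:1008.0780 — 6 statements merged into one kernel-verified Lean document; each statement's English description precedes it below -/
import Mathlib

section
/- Let A_1, A_2 be 2×2 upper triangular Toeplitz complex matrices with nonzero diagonal entries a_{1,1}, a_{2,1}. The pair (A_1, A_2) is hypercyclic on ℂ² (i.e., there exists x ∈ ℂ² such that {A_1^{k_1} A_2^{k_2} x : k_1, k_2 ∈ ℕ} is dense in ℂ²) if and only if the set {(k_1 a_{1,2}/a_{1,1} + k_2 a_{2,2}/a_{2,1}, a_{1,1}^{k_1} a_{2,1}^{k_2}) : k_1, k_2 ∈ ℕ} is dense in ℂ². -/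
open Set

lemma dense_image_aux {X : Type*} [TopologicalSpace X] {U S : Set X}
    (hUd : Dense U) (f g : X → X)
    (hf : ∀ c ∈ U, ContinuousAt f c) (hg : Set.MapsTo g U U)
    (hfg : ∀ y ∈ U, f (g y) = y) (hS : Dense S) : Dense (f '' S) := by
  have hUsub : U ⊆ closure (f '' S) := by
    intro y hy
    have hcU : g y ∈ U := hg hy
    have h1 : f (g y) ∈ closure (f '' S) := mem_closure_image (hf _ hcU) (hS _)
    rwa [hfg y hy] at h1
  exact fun x => closure_minimal hUsub isClosed_closure (hUd x)

lemma dense_ne_snd : Dense {y : Fin 2 → ℂ | y 1 ≠ 0} := by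
  have : Dense ({(0:ℂ)}ᶜ) := dense_compl_singleton 0
  have := this.preimage (isOpenMap_eval (X := fun _ : Fin 2 => ℂ) 1)
  exact this

lemma pow_tri (a b : ℂ) (ha : a ≠ 0) (k : ℕ) :
    (!![a, b; 0, a]) ^ k = !![a ^ k, (k : ℂ) * (b / a) * a ^ k; 0, a ^ k] := by
  induction k with
  | zero => simp [Matrix.one_fin_two]
  | succ n ih =>
    rw [pow_succ, ih, Matrix.mul_fin_two]
    ext i j
    fin_cases i <;> fin_cases j <;> simp <;> field_simp <;> ring

lemma prod_mulVec (a11 a12 a21 a22 : ℂ) (h1 : a11 ≠ 0) (h2 : a21 ≠ 0)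
    (k1 k2 : ℕ) (x : Fin 2 → ℂ) :
    ((!![a11, a12; 0, a11]) ^ k1 * (!![a21, a22; 0, a21]) ^ k2).mulVec x =
      ![(a11 ^ k1 * a21 ^ k2) * x 0 +
          (a11 ^ k1 * a21 ^ k2) * ((k1 : ℂ) * (a12 / a11) + (k2 : ℂ) * (a22 / a21)) * x 1,
        (a11 ^ k1 * a21 ^ k2) * x 1] := by
  rw [pow_tri a11 a12 h1 k1, pow_tri a21 a22 h2 k2, Matrix.mul_fin_two]
  funext i
  fin_cases i
  · simp [Matrix.mulVec, dotProduct, Fin.sum_univ_two, Matrix.vecHead, Matrix.vecTail]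
    left
    ring
  · simp [Matrix.mulVec, dotProduct, Fin.sum_univ_two, Matrix.vecHead, Matrix.vecTail]

theorem toeplitz2_hypercyclic_iff
    (a11 a12 a21 a22 : ℂ) (h1 : a11 ≠ 0) (h2 : a21 ≠ 0) :
    (∃ x : Fin 2 → ℂ, Dense {y : Fin 2 → ℂ | ∃ k1 k2 : ℕ,
        y = ((!![a11, a12; 0, a11]) ^ k1 * (!![a21, a22; 0, a21]) ^ k2).mulVec x})
    ↔ Dense {v : Fin 2 → ℂ | ∃ k1 k2 : ℕ,
        v = ![(k1 : ℂ) * (a12 / a11) + (k2 : ℂ) * (a22 / a21),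
              a11 ^ k1 * a21 ^ k2]} := by
  set S : Set (Fin 2 → ℂ) := {v : Fin 2 → ℂ | ∃ k1 k2 : ℕ,
        v = ![(k1 : ℂ) * (a12 / a11) + (k2 : ℂ) * (a22 / a21),
              a11 ^ k1 * a21 ^ k2]} with hSdef
  have hL : ∀ k1 k2 : ℕ, a11 ^ k1 * a21 ^ k2 ≠ 0 :=
    fun k1 k2 => mul_ne_zero (pow_ne_zero _ h1) (pow_ne_zero _ h2)
  -- Orbit of x equals the image of S under an explicit map
  have horb : ∀ x : Fin 2 → ℂ,
      {y : Fin 2 → ℂ | ∃ k1 k2 : ℕ,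
        y = ((!![a11, a12; 0, a11]) ^ k1 * (!![a21, a22; 0, a21]) ^ k2).mulVec x} =
      (fun y : Fin 2 → ℂ => ![y 1 * x 0 + y 1 * y 0 * x 1, y 1 * x 1]) '' S := by
    intro x
    ext y
    constructor
    · rintro ⟨k1, k2, rfl⟩
      refine ⟨![(k1 : ℂ) * (a12 / a11) + (k2 : ℂ) * (a22 / a21), a11 ^ k1 * a21 ^ k2],
        ⟨k1, k2, rfl⟩, ?_⟩
      rw [prod_mulVec a11 a12 a21 a22 h1 h2]
      funext i; fin_cases i <;> simp <;> ring
    · rintro ⟨v, ⟨k1, k2, rfl⟩, rfl⟩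
      refine ⟨k1, k2, ?_⟩
      rw [prod_mulVec a11 a12 a21 a22 h1 h2]
      funext i; fin_cases i <;> simp <;> ring
  constructor
  · rintro ⟨x, hx⟩
    rw [horb x] at hx
    -- first: x 1 ≠ 0
    have hx1 : x 1 ≠ 0 := by
      intro h0
      have hsub : (fun y : Fin 2 → ℂ => ![y 1 * x 0 + y 1 * y 0 * x 1, y 1 * x 1]) '' S ⊆
          {y : Fin 2 → ℂ | y 1 = 0} := by
        rintro _ ⟨v, _, rfl⟩
        simp [h0]
      have hcl : IsClosed {y : Fin 2 → ℂ | y 1 = 0} :=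
        isClosed_eq (continuous_apply 1) continuous_const
      have := hx.closure_eq
      have h2' : closure ((fun y : Fin 2 → ℂ => ![y 1 * x 0 + y 1 * y 0 * x 1, y 1 * x 1]) '' S)
          ⊆ {y : Fin 2 → ℂ | y 1 = 0} := closure_minimal hsub hcl
      rw [this] at h2'
      have : (![0, 1] : Fin 2 → ℂ) ∈ {y : Fin 2 → ℂ | y 1 = 0} := h2' (mem_univ _)
      simp at this
    -- S = g '' orbit, with g the inverse homeomorphism on {y 1 ≠ 0}
    set f : (Fin 2 → ℂ) → (Fin 2 → ℂ) :=
      fun y => ![y 1 * x 0 + y 1 * y 0 * x 1, y 1 * x 1] with hfdef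
    set g : (Fin 2 → ℂ) → (Fin 2 → ℂ) :=
      fun y => ![(y 0 * x 1 - y 1 * x 0) / (y 1 * x 1), y 1 / x 1] with hgdef
    have hgf : ∀ v : Fin 2 → ℂ, v 1 ≠ 0 → g (f v) = v := by
      intro v hv
      funext i
      fin_cases i <;> simp [hfdef, hgdef] <;> field_simp <;> ring
    have hSeq : S = g '' (f '' S) := by
      ext v
      constructor
      · rintro ⟨k1, k2, rfl⟩
        refine ⟨f ![(k1 : ℂ) * (a12 / a11) + (k2 : ℂ) * (a22 / a21), a11 ^ k1 * a21 ^ k2],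
          ⟨_, ⟨k1, k2, rfl⟩, rfl⟩, ?_⟩
        rw [hgf]
        simp [hL k1 k2]
      · rintro ⟨_, ⟨v, ⟨k1, k2, rfl⟩, rfl⟩, rfl⟩
        rw [hgf]
        · exact ⟨k1, k2, rfl⟩
        · simp [hL k1 k2]
    rw [hSeq]
    refine dense_image_aux dense_ne_snd g f ?_ ?_ ?_ hx
    · intro c hc
      have hc1 : c 1 ≠ 0 := hc
      apply continuousAt_pi.2
      intro i
      fin_cases i
      · simpa [hgdef, Pi.mul_def, Pi.sub_def, Pi.div_def] using ((((continuous_apply 0).continuousAt.mul continuousAt_const).sub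
          ((continuous_apply 1).continuousAt.mul continuousAt_const)).div
          ((continuous_apply 1).continuousAt.mul continuousAt_const)
          (mul_ne_zero hc1 hx1))
      · simpa [hgdef, Pi.div_def] using ((continuous_apply 1).continuousAt.div continuousAt_const hx1)
    · intro v hv
      have hv1 : v 1 ≠ 0 := hv
      show (f v) 1 ≠ 0
      simp [hfdef]
      exact ⟨hv1, hx1⟩
    · intro y hy
      have hy1 : y 1 ≠ 0 := hy
      funext i
      fin_cases i <;> simp [hfdef, hgdef] <;> field_simp <;> ring
  · intro hS
    refine ⟨![0, 1], ?_⟩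
    rw [horb ![0, 1]]
    have hsimp : (fun y : Fin 2 → ℂ =>
        ![y 1 * (![0, 1] : Fin 2 → ℂ) 0 + y 1 * y 0 * (![0, 1] : Fin 2 → ℂ) 1,
          y 1 * (![0, 1] : Fin 2 → ℂ) 1]) =
        fun y : Fin 2 → ℂ => ![y 1 * y 0, y 1] := by
      funext y
      funext i
      fin_cases i <;> simp
    rw [hsimp]
    refine dense_image_aux dense_ne_snd _ (fun y => ![y 0 / y 1, y 1]) ?_ ?_ ?_ hS
    · intro c _
      apply continuousAt_pi.2
      intro i
      fin_cases i <;> simp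
      · exact ((continuous_apply 1).continuousAt.mul (continuous_apply 0).continuousAt)
      · exact (continuous_apply 1).continuousAt
    · intro v hv
      have hv1 : v 1 ≠ 0 := hv
      show (![v 0 / v 1, v 1] : Fin 2 → ℂ) 1 ≠ 0
      simpa using hv1
    · intro y hy
      have hy1 : y 1 ≠ 0 := hy
      funext i
      fin_cases i
      · simp
        field_simp
      · simp
end

section
/- No pair (A_1, A_2) of 2×2 upper triangular Toeplitz complex matrices is hypercyclic on ℂ²: for all x ∈ ℂ² the set {A_1^{k_1} A_2^{k_2} x : k_1, k_2 ∈ ℕ} is not dense in ℂ². -/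
open Complex Matrix

lemma pow_form (a b : ℂ) : ∀ k : ℕ, ∃ c : ℂ, (!![a,b;0,a])^k = !![a^k, c; 0, a^k] ∧ a * c = k * a^k * b ∧ (k = 0 → c = 0) := by
  intro k
  induction k with
  | zero => exact ⟨0, by simp [Matrix.one_fin_two], by simp, fun _ => rfl⟩
  | succ n ih =>
    obtain ⟨c, hc, hac, -⟩ := ih
    refine ⟨a^n * b + c * a, ?_, ?_, by simp⟩
    · rw [pow_succ, hc, Matrix.mul_fin_two]
      norm_num [pow_succ]
    · push_cast
      linear_combination a * hac

lemma prod_form (a1 b1 a2 b2 : ℂ) (k1 k2 : ℕ) :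
    ∃ C : ℂ, (!![a1,b1;0,a1])^k1 * (!![a2,b2;0,a2])^k2
        = !![a1^k1*a2^k2, C; 0, a1^k1*a2^k2] ∧
      (a1^k1*a2^k2 ≠ 0 → C = a1^k1*a2^k2 *
        (k1 * (if a1 = 0 then 0 else b1/a1) + k2 * (if a2 = 0 then 0 else b2/a2))) := by
  obtain ⟨c1, hc1, hac1, hz1⟩ := pow_form a1 b1 k1
  obtain ⟨c2, hc2, hac2, hz2⟩ := pow_form a2 b2 k2
  refine ⟨a1^k1 * c2 + c1 * a2^k2, ?_, ?_⟩
  · rw [hc1, hc2, Matrix.mul_fin_two]; norm_num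
  · intro hd
    have h1 : a1^k1 ≠ 0 := fun h => hd (by rw [h]; ring)
    have h2 : a2^k2 ≠ 0 := fun h => hd (by rw [h]; ring)
    by_cases ha1 : a1 = 0
    · have hk1 : k1 = 0 := by
        by_contra hk
        exact h1 (by rw [ha1]; exact zero_pow hk)
      subst hk1
      simp only [pow_zero, one_mul, hz1 rfl, zero_mul, add_zero, if_pos ha1,
        Nat.cast_zero, zero_mul, zero_add]
      by_cases ha2 : a2 = 0
      · have hk2 : k2 = 0 := by
          by_contra hk
          exact h2 (by rw [ha2]; exact zero_pow hk)
        subst hk2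
        simp [hz2 rfl]
      · rw [if_neg ha2]
        field_simp
        linear_combination hac2
    · by_cases ha2 : a2 = 0
      · have hk2 : k2 = 0 := by
          by_contra hk
          exact h2 (by rw [ha2]; exact zero_pow hk)
        subst hk2
        simp only [pow_zero, mul_one, hz2 rfl, mul_zero, zero_add, if_pos ha2,
          Nat.cast_zero, zero_mul, add_zero, if_neg ha1]
        field_simp
        linear_combination hac1
      · rw [if_neg ha1, if_neg ha2]
        field_simp
        linear_combination a1^k1 * a1 * hac2 + a2^k2 * a2 * hac1

lemma exists_w (b1 b2 : ℂ) : ∃ w : ℂ, w ≠ 0 ∧ 0 ≤ (b1 * w).re ∧ 0 ≤ (b2 * w).re := by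
  by_cases h1 : b1 = 0
  · by_cases h2 : b2 = 0
    · exact ⟨1, one_ne_zero, by simp [h1], by simp [h2]⟩
    · refine ⟨(starRingEnd ℂ) b2, by simpa using h2, by simp [h1], ?_⟩
      rw [mul_conj]
      simp [normSq_nonneg]
  · set u := Complex.I * (starRingEnd ℂ) b1 with hu
    have hu0 : u ≠ 0 := mul_ne_zero I_ne_zero (by simpa using h1)
    have hre : (b1 * u).re = 0 := by
      rw [hu, show b1 * (Complex.I * (starRingEnd ℂ) b1) = Complex.I * (b1 * (starRingEnd ℂ) b1) by ring,
        mul_conj]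
      simp
    rcases le_or_gt 0 (b2 * u).re with h | h
    · exact ⟨u, hu0, le_of_eq hre.symm, h⟩
    · refine ⟨-u, neg_ne_zero.mpr hu0, ?_, ?_⟩
      · simp [hre]
      · rw [mul_neg]
        simp only [neg_re]
        linarith

lemma mulVec_two (p q r s : ℂ) (x : Fin 2 → ℂ) :
    (!![p,q;r,s]).mulVec x = ![p * x 0 + q * x 1, r * x 0 + s * x 1] := by
  funext i
  fin_cases i <;> simp [Matrix.mulVec, dotProduct, Fin.sum_univ_two]

theorem toeplitz2_not_hypercyclic
    (a11 a12 a21 a22 : ℂ) (x : Fin 2 → ℂ) :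
    ¬ Dense {y : Fin 2 → ℂ | ∃ k1 k2 : ℕ,
        y = ((!![a11, a12; 0, a11]) ^ k1 * (!![a21, a22; 0, a21]) ^ k2).mulVec x} := by
  intro hd
  by_cases hx1 : x 1 = 0
  · -- second coordinate of every orbit point is 0
    have hU : IsOpen {y : Fin 2 → ℂ | y 1 ≠ 0} :=
      isOpen_ne_fun (continuous_apply 1) continuous_const
    obtain ⟨y, hyS, hyU⟩ := hd.exists_mem_open hU ⟨![0,1], by simp⟩
    obtain ⟨k1, k2, hy⟩ := hyS
    obtain ⟨C, hP, -⟩ := prod_form a11 a12 a21 a22 k1 k2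
    apply hyU
    rw [hy, hP, mulVec_two]
    simp [hx1]
  · set B1 : ℂ := if a11 = 0 then 0 else a12/a11 with hB1
    set B2 : ℂ := if a21 = 0 then 0 else a22/a21 with hB2
    obtain ⟨w, hw0, hb1, hb2⟩ := exists_w B1 B2
    set c0 : ℝ := ((x 0 * (starRingEnd ℂ) (x 1)) * w).re with hc0
    set g : (Fin 2 → ℂ) → ℝ := fun y =>
      normSq (x 1) * ((y 0 * (starRingEnd ℂ) (y 1)) * w).re - c0 * normSq (y 1) with hg
    have hgc : Continuous g := by
      have h := Complex.continuous_normSq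
      fun_prop [Complex.continuous_normSq]
    have hU : IsOpen {y : Fin 2 → ℂ | g y < 0} := isOpen_lt hgc continuous_const
    have hx1n : normSq (x 1) ≠ 0 := (Complex.normSq_pos.mpr hx1).ne'
    have hwn : normSq w ≠ 0 := (Complex.normSq_pos.mpr hw0).ne'
    have hne : ({y : Fin 2 → ℂ | g y < 0}).Nonempty := by
      refine ⟨![(((c0 - 1)/(normSq (x 1) * normSq w) : ℝ) : ℂ) * (starRingEnd ℂ) w, 1], ?_⟩
      simp only [Set.mem_setOf_eq, hg, Matrix.cons_val_zero, Matrix.cons_val_one,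
        Matrix.head_cons, _root_.map_one, mul_one]
      have : ((((c0 - 1)/(normSq (x 1) * normSq w) : ℝ) : ℂ) * (starRingEnd ℂ) w * w).re
          = (c0 - 1)/(normSq (x 1) * normSq w) * normSq w := by
        rw [mul_assoc, show (starRingEnd ℂ) w * w = w * (starRingEnd ℂ) w by ring, mul_conj,
          ← Complex.ofReal_mul]
        exact Complex.ofReal_re _
      rw [this]
      have heq : normSq (x 1) * ((c0 - 1) / (normSq (x 1) * normSq w) * normSq w) = c0 - 1 := by
        field_simp
      rw [heq]
      linarith
    obtain ⟨y, hyS, hyU⟩ := hd.exists_mem_open hU hne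
    obtain ⟨k1, k2, hy⟩ := hyS
    obtain ⟨C, hP, hC⟩ := prod_form a11 a12 a21 a22 k1 k2
    set d : ℂ := a11^k1 * a21^k2 with hdd
    have hy' : y = ![d * x 0 + C * x 1, 0 * x 0 + d * x 1] := by rw [hy, hP, mulVec_two]
    have hy0 : y 0 = d * x 0 + C * x 1 := by rw [hy']; simp
    have hy1 : y 1 = d * x 1 := by rw [hy']; simp
    have key : 0 ≤ (C * (starRingEnd ℂ) d * w).re := by
      by_cases hdz : d = 0
      · simp [hdz]
      · rw [hC hdz]
        have expand : d * ((k1 : ℂ) * B1 + (k2 : ℂ) * B2) * (starRingEnd ℂ) d * w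
            = (normSq d : ℂ) * ((k1 : ℂ) * (B1 * w) + (k2 : ℂ) * (B2 * w)) := by
          rw [← Complex.mul_conj d]
          ring
        rw [expand]
        have hreq : ((normSq d : ℂ) * ((k1 : ℂ) * (B1 * w) + (k2 : ℂ) * (B2 * w))).re
            = normSq d * ((k1 : ℝ) * (B1 * w).re + (k2 : ℝ) * (B2 * w).re) := by
          simp [Complex.mul_re, Complex.add_re, Complex.ofReal_re, Complex.ofReal_im,
            Complex.natCast_re, Complex.natCast_im]
        rw [hreq]
        have hsum : 0 ≤ (k1 : ℝ) * (B1 * w).re + (k2 : ℝ) * (B2 * w).re := by positivity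
        exact mul_nonneg (normSq_nonneg d) hsum
    have hge : 0 ≤ g y := by
      have expand2 : y 0 * (starRingEnd ℂ) (y 1) * w
          = (normSq d : ℂ) * (x 0 * (starRingEnd ℂ) (x 1) * w)
            + (normSq (x 1) : ℂ) * (C * (starRingEnd ℂ) d * w) := by
        rw [hy0, hy1, _root_.map_mul, ← Complex.mul_conj d, ← Complex.mul_conj (x 1)]
        ring
      have hre2 : (y 0 * (starRingEnd ℂ) (y 1) * w).re
          = normSq d * c0 + normSq (x 1) * (C * (starRingEnd ℂ) d * w).re := by
        rw [expand2]
        simp [Complex.add_re, Complex.mul_re, Complex.ofReal_re, Complex.ofReal_im, hc0]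
      have hns : normSq (y 1) = normSq d * normSq (x 1) := by rw [hy1, Complex.normSq_mul]
      rw [hg]
      simp only
      rw [hre2, hns]
      have h1 : (0:ℝ) ≤ normSq (x 1) := normSq_nonneg _
      nlinarith [mul_nonneg (mul_nonneg h1 h1) key]
    rw [Set.mem_setOf_eq] at hyU
    linarith
end

section
/- Let A_1, A_2, A_3 be 3×3 upper triangular Toeplitz complex matrices with nonzero diagonal entries a_{j,1}. The triple (A_1, A_2, A_3) is hypercyclic on ℂ³ if and only if the set {(Σ_{j=1}^3 k_j(a_{j,3}/a_{j,1} − (1/2)a_{j,2}²/a_{j,1}²), Σ_{j=1}^3 k_j a_{j,2}/a_{j,1}, a_{1,1}^{k_1} a_{2,1}^{k_2} a_{3,1}^{k_3}) : k_1, k_2, k_3 ∈ ℕ} is dense in ℂ³. -/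
set_option maxHeartbeats 1600000
set_option linter.unnecessarySeqFocus false

open Matrix Set

noncomputable def ToepMk (l S T : ℂ) : Matrix (Fin 3) (Fin 3) ℂ :=
  !![l, l*S, l*T; 0, l, l*S; 0, 0, l]

lemma ToepMk_mul (l S T l' S' T' : ℂ) :
    ToepMk l S T * ToepMk l' S' T' = ToepMk (l*l') (S+S') (T+T'+S*S') := by
  ext i j
  fin_cases i <;> fin_cases j <;>
    simp [ToepMk, Matrix.mul_apply, Fin.sum_univ_three, Matrix.vecHead, Matrix.vecTail] <;> ring

lemma ToepMk_one : ToepMk 1 0 0 = 1 := by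
  ext i j
  fin_cases i <;> fin_cases j <;> simp [ToepMk, Matrix.one_apply, Matrix.vecHead, Matrix.vecTail]

lemma ToepMk_pow (l S T : ℂ) (k : ℕ) :
    ToepMk l S T ^ k
      = ToepMk (l^k) ((k:ℂ)*S) ((k:ℂ)*T + ((k:ℂ)*((k:ℂ)-1)/2)*S^2) := by
  induction k with
  | zero => simp [ToepMk_one.symm]
  | succ n ih =>
      rw [pow_succ, ih, ToepMk_mul]
      have h1 : l^n * l = l^(n+1) := (pow_succ l n).symm
      have h2 : (n:ℂ)*S + S = ((n+1 : ℕ):ℂ)*S := by push_cast; ring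
      have h3 : ((n:ℂ)*T + ((n:ℂ)*((n:ℂ)-1)/2)*S^2) + T + ((n:ℂ)*S)*S
          = ((n+1:ℕ):ℂ)*T + (((n+1:ℕ):ℂ)*(((n+1:ℕ):ℂ)-1)/2)*S^2 := by
        push_cast; ring
      rw [h1, h2, h3]

lemma ToepMk_mulVec (l S T : ℂ) (x : Fin 3 → ℂ) :
    (ToepMk l S T).mulVec x
      = ![l*(x 0 + S * x 1 + T * x 2), l*(x 1 + S * x 2), l * x 2] := by
  funext i
  fin_cases i <;>
    simp [ToepMk, Matrix.mulVec, dotProduct, Fin.sum_univ_three,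
      Matrix.vecHead, Matrix.vecTail] <;> ring

lemma toToepMk (a0 a1 a2 : ℂ) (h : a0 ≠ 0) :
    !![a0, a1, a2; 0, a0, a1; 0, 0, a0] = ToepMk a0 (a1/a0) (a2/a0) := by
  ext i j
  fin_cases i <;> fin_cases j <;> simp [ToepMk, Matrix.vecHead, Matrix.vecTail] <;> field_simp

/-- The map realizing orbit points from invariant data, for cyclic vector `x`. -/
noncomputable def toepPsi (x : Fin 3 → ℂ) (v : Fin 3 → ℂ) : Fin 3 → ℂ :=
  ![v 2 * (x 0 + v 1 * x 1 + (v 0 + v 1^2/2) * x 2),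
    v 2 * (x 1 + v 1 * x 2), v 2 * x 2]

/-- Partial inverse of `toepPsi x`, continuous where `y 2 ≠ 0` (given `x 2 ≠ 0`). -/
noncomputable def toepPhi (x : Fin 3 → ℂ) (y : Fin 3 → ℂ) : Fin 3 → ℂ :=
  ![((y 0 * x 2 / y 2 - x 0 - ((y 1 * x 2 / y 2 - x 1)/x 2) * x 1)/x 2
      - ((y 1 * x 2 / y 2 - x 1)/x 2)^2/2),
    (y 1 * x 2 / y 2 - x 1)/x 2,
    y 2 / x 2]

lemma dense_ne2 : Dense {y : Fin 3 → ℂ | y 2 ≠ 0} := by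
  have : {y : Fin 3 → ℂ | y 2 ≠ 0}
      = (Function.eval 2 : (Fin 3 → ℂ) → ℂ) ⁻¹' ({(0:ℂ)}ᶜ) := rfl
  rw [this]
  exact (dense_compl_singleton (0:ℂ)).preimage (isOpenMap_eval 2)

lemma isOpen_ne2 : IsOpen {y : Fin 3 → ℂ | y 2 ≠ 0} :=
  isOpen_compl_singleton.preimage (continuous_apply 2)

lemma toepPhi_contOn (x : Fin 3 → ℂ) :
    ContinuousOn (toepPhi x) {y : Fin 3 → ℂ | y 2 ≠ 0} := by
  have h2 : ContinuousOn (fun y : Fin 3 → ℂ => y 2) {y : Fin 3 → ℂ | y 2 ≠ 0} :=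
    (continuous_apply 2).continuousOn
  have hS : ContinuousOn (fun y : Fin 3 → ℂ => (y 1 * x 2 / y 2 - x 1)/x 2)
      {y : Fin 3 → ℂ | y 2 ≠ 0} :=
    ((((continuous_apply 1).continuousOn.mul continuousOn_const).div h2
      (fun y hy => hy)).sub continuousOn_const).div_const _
  have hA : ContinuousOn (fun y : Fin 3 → ℂ => y 0 * x 2 / y 2)
      {y : Fin 3 → ℂ | y 2 ≠ 0} :=
    ((continuous_apply 0).continuousOn.mul continuousOn_const).div h2 (fun y hy => hy)
  rw [continuousOn_pi]
  intro i
  fin_cases i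
  · simp only [toepPhi, Fin.zero_eta, Matrix.cons_val_zero]
    exact (((hA.sub continuousOn_const).sub (hS.mul continuousOn_const)).div_const _).sub
        ((hS.pow 2).div_const 2)
  · simpa only [toepPhi, Fin.mk_one, Matrix.cons_val_one, Matrix.cons_val_zero, Matrix.head_cons] using hS
  · simpa only [toepPhi, Fin.reduceFinMk, Matrix.cons_val_two, Matrix.tail_cons, Matrix.head_cons] using
      h2.div_const _

lemma toepPhi_toepPsi (x v : Fin 3 → ℂ) (hx2 : x 2 ≠ 0) (hv2 : v 2 ≠ 0) :
    toepPhi x (toepPsi x v) = v := by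
  funext i
  fin_cases i
  · simp only [toepPhi, toepPsi, Fin.isValue, Fin.zero_eta, Fin.mk_one, Fin.reduceFinMk, Matrix.cons_val_zero, Matrix.cons_val_one,
      Matrix.head_cons, Matrix.cons_val_two, Matrix.tail_cons]
    field_simp [hx2, hv2]
    ring
  · simp only [toepPhi, toepPsi, Fin.isValue, Fin.zero_eta, Fin.mk_one, Fin.reduceFinMk, Matrix.cons_val_zero, Matrix.cons_val_one,
      Matrix.head_cons, Matrix.cons_val_two, Matrix.tail_cons]
    field_simp [hx2, hv2]
    ring
  · simp only [toepPhi, toepPsi, Fin.isValue, Fin.zero_eta, Fin.mk_one, Fin.reduceFinMk, Matrix.cons_val_zero, Matrix.cons_val_one,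
      Matrix.head_cons, Matrix.cons_val_two, Matrix.tail_cons]
    field_simp [hx2, hv2]

/-- Transfer density backwards through a map with a partial continuous inverse. -/
lemma dense_transfer {α β : Type*} [TopologicalSpace α] [TopologicalSpace β]
    {f : α → β} {g : β → α} {U : Set α} {V : Set β} {s : Set α}
    (hU : Dense U) (hVopen : IsOpen V)
    (hfV : ∀ a ∈ U, f a ∈ V) (hg : ContinuousOn g V)
    (hgf : ∀ a ∈ U, g (f a) = a) (hsU : s ⊆ U)
    (himg : Dense (f '' s)) : Dense s := by
  have hsub : U ⊆ closure s := by
    intro a haU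
    have hfa : f a ∈ V := hfV a haU
    have h1 : f a ∈ closure (V ∩ f '' s) :=
      himg.open_subset_closure_inter hVopen hfa
    have hc : ContinuousWithinAt g (V ∩ f '' s) (f a) :=
      (hg (f a) hfa).mono inter_subset_left
    have h2 := hc.mem_closure_image h1
    have himgsub : g '' (V ∩ f '' s) ⊆ s := by
      rintro _ ⟨y, ⟨hyV, ⟨d, hd, rfl⟩⟩, rfl⟩
      rw [hgf d (hsU hd)]; exact hd
    have h3 : g (f a) ∈ closure s := closure_mono himgsub h2
    rwa [hgf a haU] at h3
  have h4 : closure U ⊆ closure s := closure_minimal hsub isClosed_closure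
  rw [dense_iff_closure_eq] at *
  exact univ_subset_iff.mp (hU ▸ h4)

theorem toeplitz3_hypercyclic_iff
    (a : Fin 3 → Fin 3 → ℂ) (ha : ∀ j, a j 0 ≠ 0) :
    (∃ x : Fin 3 → ℂ, Dense {y : Fin 3 → ℂ | ∃ k : Fin 3 → ℕ,
        y = ((!![a 0 0, a 0 1, a 0 2; 0, a 0 0, a 0 1; 0, 0, a 0 0]) ^ k 0 *
             (!![a 1 0, a 1 1, a 1 2; 0, a 1 0, a 1 1; 0, 0, a 1 0]) ^ k 1 *
             (!![a 2 0, a 2 1, a 2 2; 0, a 2 0, a 2 1; 0, 0, a 2 0]) ^ k 2).mulVec x})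
    ↔ Dense {v : Fin 3 → ℂ | ∃ k : Fin 3 → ℕ,
        v = ![∑ j : Fin 3, (k j : ℂ) * (a j 2 / a j 0 - (1/2) * (a j 1)^2 / (a j 0)^2),
              ∑ j : Fin 3, (k j : ℂ) * (a j 1 / a j 0),
              ∏ j : Fin 3, a j 0 ^ k j]} := by
  set w : (Fin 3 → ℕ) → (Fin 3 → ℂ) := fun k =>
    ![∑ j : Fin 3, (k j : ℂ) * (a j 2 / a j 0 - (1/2) * (a j 1)^2 / (a j 0)^2),
      ∑ j : Fin 3, (k j : ℂ) * (a j 1 / a j 0),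
      ∏ j : Fin 3, a j 0 ^ k j] with hw
  have key : ∀ (k : Fin 3 → ℕ) (x : Fin 3 → ℂ),
      ((!![a 0 0, a 0 1, a 0 2; 0, a 0 0, a 0 1; 0, 0, a 0 0]) ^ k 0 *
       (!![a 1 0, a 1 1, a 1 2; 0, a 1 0, a 1 1; 0, 0, a 1 0]) ^ k 1 *
       (!![a 2 0, a 2 1, a 2 2; 0, a 2 0, a 2 1; 0, 0, a 2 0]) ^ k 2).mulVec x
      = toepPsi x (w k) := by
    intro k x
    rw [toToepMk _ _ _ (ha 0), toToepMk _ _ _ (ha 1), toToepMk _ _ _ (ha 2),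
        ToepMk_pow, ToepMk_pow, ToepMk_pow, ToepMk_mul, ToepMk_mul, ToepMk_mulVec]
    funext i
    fin_cases i <;>
      simp only [hw, toepPsi, Fin.sum_univ_three, Fin.prod_univ_three, Fin.isValue,
        Matrix.cons_val_zero, Matrix.cons_val_one, Matrix.head_cons,
        Matrix.cons_val_two, Matrix.tail_cons] <;>
      field_simp <;> ring
  have himg : ∀ x : Fin 3 → ℂ, {y : Fin 3 → ℂ | ∃ k : Fin 3 → ℕ,
        y = ((!![a 0 0, a 0 1, a 0 2; 0, a 0 0, a 0 1; 0, 0, a 0 0]) ^ k 0 *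
             (!![a 1 0, a 1 1, a 1 2; 0, a 1 0, a 1 1; 0, 0, a 1 0]) ^ k 1 *
             (!![a 2 0, a 2 1, a 2 2; 0, a 2 0, a 2 1; 0, 0, a 2 0]) ^ k 2).mulVec x}
      = toepPsi x '' {v : Fin 3 → ℂ | ∃ k : Fin 3 → ℕ, v = w k} := by
    intro x
    ext y
    constructor
    · rintro ⟨k, rfl⟩
      exact ⟨w k, ⟨k, rfl⟩, (key k x).symm⟩
    · rintro ⟨v, ⟨k, rfl⟩, rfl⟩
      exact ⟨k, (key k x).symm⟩
  have hDV : {v : Fin 3 → ℂ | ∃ k : Fin 3 → ℕ, v = w k}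
      ⊆ {v : Fin 3 → ℂ | v 2 ≠ 0} := by
    rintro v ⟨k, rfl⟩
    have hL : (∏ j : Fin 3, a j 0 ^ k j) ≠ 0 :=
      Finset.prod_ne_zero_iff.mpr fun j _ => pow_ne_zero _ (ha j)
    simpa [hw] using hL
  constructor
  · rintro ⟨x, hx⟩
    rw [himg x] at hx
    have hx2 : x 2 ≠ 0 := by
      intro h0
      have hsub : toepPsi x '' {v : Fin 3 → ℂ | ∃ k : Fin 3 → ℕ, v = w k}
          ⊆ {y : Fin 3 → ℂ | y 2 = 0} := by
        rintro _ ⟨v, -, rfl⟩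
        show v 2 * x 2 = 0
        rw [h0, mul_zero]
      have hcls : IsClosed {y : Fin 3 → ℂ | y 2 = 0} :=
        isClosed_singleton.preimage (continuous_apply 2)
      have h5 : closure (toepPsi x '' {v : Fin 3 → ℂ | ∃ k : Fin 3 → ℕ, v = w k})
          ⊆ {y : Fin 3 → ℂ | y 2 = 0} := closure_minimal hsub hcls
      have h6 := h5 (hx ![0,0,1])
      simp at h6
    exact dense_transfer dense_ne2 isOpen_ne2
      (fun v hv => mul_ne_zero hv hx2) (toepPhi_contOn x)
      (fun v hv => toepPhi_toepPsi x v hx2 hv) hDV hx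
  · intro hdense
    refine ⟨![0,0,1], ?_⟩
    rw [himg ![0,0,1]]
    have hcont : Continuous (toepPsi ![0,0,1]) := by
      apply continuous_pi
      intro i
      fin_cases i
      · show Continuous fun v : Fin 3 → ℂ => v 2 * ((![0,0,1] : Fin 3 → ℂ) 0
          + v 1 * (![0,0,1] : Fin 3 → ℂ) 1 + (v 0 + v 1^2/2) * (![0,0,1] : Fin 3 → ℂ) 2)
        fun_prop
      · show Continuous fun v : Fin 3 → ℂ => v 2 * ((![0,0,1] : Fin 3 → ℂ) 1
          + v 1 * (![0,0,1] : Fin 3 → ℂ) 2)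
        fun_prop
      · show Continuous fun v : Fin 3 → ℂ => v 2 * (![0,0,1] : Fin 3 → ℂ) 2
        fun_prop
    have hrange : DenseRange (toepPsi ![0,0,1]) := by
      apply dense_ne2.mono
      rintro y (hy : y 2 ≠ 0)
      refine ⟨![y 0/y 2 - (y 1/y 2)^2/2, y 1/y 2, y 2], ?_⟩
      funext i
      fin_cases i <;>
        simp only [toepPsi, Fin.isValue, Fin.zero_eta, Fin.mk_one, Fin.reduceFinMk, Matrix.cons_val_zero, Matrix.cons_val_one,
          Matrix.head_cons, Matrix.cons_val_two, Matrix.tail_cons] <;>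
        field_simp [hy] <;> first | rfl | ring
    exact hrange.dense_image hcont hdense
end

section
/- No triple (A_1, A_2, A_3) of 3×3 upper triangular Toeplitz complex matrices is hypercyclic on ℂ³. -/
open Matrix

noncomputable section ToepAux

def TT (p q r : ℂ) : Matrix (Fin 3) (Fin 3) ℂ := !![p,q,r;0,p,q;0,0,p]

lemma TT_mul (p q r p' q' r' : ℂ) :
    TT p q r * TT p' q' r' = TT (p*p') (p*q'+q*p') (p*r'+q*q'+r*p') := by
  ext i j
  fin_cases i <;> fin_cases j <;>
    simp [TT, Matrix.mul_apply, Fin.sum_univ_succ, Matrix.vecHead, Matrix.vecTail] <;> ring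

lemma one_eq_TT : (1 : Matrix (Fin 3) (Fin 3) ℂ) = TT 1 0 0 := by
  ext i j
  fin_cases i <;> fin_cases j <;> simp [TT, Matrix.one_apply, Matrix.vecHead, Matrix.vecTail]

lemma TT_pow_exists (p q r : ℂ) (k : ℕ) : ∃ B C, TT p q r ^ k = TT (p^k) B C := by
  induction k with
  | zero => exact ⟨0, 0, by simpa using one_eq_TT⟩
  | succ n ih =>
    obtain ⟨B, C, h⟩ := ih
    exact ⟨_, _, by rw [pow_succ, h, TT_mul, ← pow_succ]⟩

def EE (u v : ℂ) : Matrix (Fin 3) (Fin 3) ℂ := TT 1 u (v + u^2/2)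

lemma EE_mul (u v u' v' : ℂ) : EE u v * EE u' v' = EE (u+u') (v+v') := by
  rw [EE, EE, EE, TT_mul]
  congr 1 <;> ring

lemma EE_zero : EE 0 0 = 1 := by
  rw [EE, one_eq_TT]; congr 1 <;> ring

lemma EE_pow (u v : ℂ) (k : ℕ) : EE u v ^ k = EE (k*u) (k*v) := by
  induction k with
  | zero => simp [EE_zero]
  | succ n ih =>
    rw [pow_succ, ih, EE_mul]
    push_cast
    congr 1 <;> ring

lemma smul_TT (t p q r : ℂ) : t • TT p q r = TT (t*p) (t*q) (t*r) := by
  ext i j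
  fin_cases i <;> fin_cases j <;> simp [TT, Matrix.vecHead, Matrix.vecTail]

lemma TT_pow_of_ne (p q r : ℂ) (hp : p ≠ 0) (k : ℕ) :
    TT p q r ^ k = p^k • EE (k*(q/p)) (k*(r/p - (q/p)^2/2)) := by
  have h1 : TT p q r = p • EE (q/p) (r/p - (q/p)^2/2) := by
    have hq : p * (q / p) = q := by field_simp
    have hr : p * (r / p - (q / p) ^ 2 / 2 + (q / p) ^ 2 / 2) = r := by
      rw [sub_add_cancel]; field_simp
    rw [EE, smul_TT, mul_one, hq, hr]
  rw [h1, smul_pow, EE_pow]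

lemma TT_mulVec (p q r : ℂ) (x : Fin 3 → ℂ) :
    (TT p q r).mulVec x = ![p*x 0 + q*x 1 + r*x 2, p*x 1 + q*x 2, p*x 2] := by
  ext i
  fin_cases i <;> simp [TT, Matrix.mulVec, dotProduct, Fin.sum_univ_succ] <;> ring

def ψ (y : Fin 3 → ℂ) : ℝ × ℂ × ℂ :=
  (Real.log (‖y 2‖), y 1 / y 2, y 0 / y 2 - (y 1 / y 2)^2/2)

def βa (a : Fin 3 → Fin 3 → ℂ) (i : Fin 3) : ℂ :=
  if a i 0 = 0 then 0 else a i 1 / a i 0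

def γa (a : Fin 3 → Fin 3 → ℂ) (i : Fin 3) : ℂ :=
  if a i 0 = 0 then 0 else a i 2 / a i 0 - (a i 1 / a i 0)^2/2

lemma factor_eq (a : Fin 3 → Fin 3 → ℂ) (i : Fin 3) (k : ℕ) (h : a i 0 ^ k ≠ 0) :
    TT (a i 0) (a i 1) (a i 2) ^ k = (a i 0)^k • EE (k * βa a i) (k * γa a i) := by
  by_cases h0 : a i 0 = 0
  · have hk : k = 0 := by
      by_contra hk
      exact h (by rw [h0, zero_pow hk])
    subst hk
    simp [EE_zero]
  · rw [TT_pow_of_ne _ _ _ h0, βa, γa, if_neg h0, if_neg h0]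

lemma prod_eq (a : Fin 3 → Fin 3 → ℂ) (k : Fin 3 → ℕ) (h : ∀ i, a i 0 ^ k i ≠ 0) :
    TT (a 0 0) (a 0 1) (a 0 2) ^ k 0 * TT (a 1 0) (a 1 1) (a 1 2) ^ k 1 *
      TT (a 2 0) (a 2 1) (a 2 2) ^ k 2
    = (a 0 0 ^ k 0 * a 1 0 ^ k 1 * a 2 0 ^ k 2) •
        EE ((k 0) * βa a 0 + (k 1) * βa a 1 + (k 2) * βa a 2)
           ((k 0) * γa a 0 + (k 1) * γa a 1 + (k 2) * γa a 2) := by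
  rw [factor_eq a 0 _ (h 0), factor_eq a 1 _ (h 1), factor_eq a 2 _ (h 2)]
  simp only [smul_mul_assoc, mul_smul_comm, EE_mul, smul_smul]
  have hs : a 2 0 ^ k 2 * (a 1 0 ^ k 1 * a 0 0 ^ k 0)
      = a 0 0 ^ k 0 * a 1 0 ^ k 1 * a 2 0 ^ k 2 := by ring
  rw [hs]

lemma EE_mulVec (u v : ℂ) (x : Fin 3 → ℂ) :
    (EE u v).mulVec x = ![x 0 + u * x 1 + (v + u^2/2) * x 2, x 1 + u * x 2, x 2] := by
  rw [EE, TT_mulVec]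
  ext i
  fin_cases i <;> simp <;> ring

lemma psi_orbit (t u v : ℂ) (x : Fin 3 → ℂ) (ht : t ≠ 0) (hx : x 2 ≠ 0) :
    ψ (t • ![x 0 + u * x 1 + (v + u^2/2) * x 2, x 1 + u * x 2, x 2]) - ψ x
    = (Real.log (‖t‖), u, v) := by
  have habs : ‖t‖ ≠ 0 := by simpa using ht
  have habx : ‖x 2‖ ≠ 0 := by simpa using hx
  have h2 : (t • ![x 0 + u * x 1 + (v + u^2/2) * x 2, x 1 + u * x 2, x 2]) 2 = t * x 2 := by
    simp
  have h1 : (t • ![x 0 + u * x 1 + (v + u^2/2) * x 2, x 1 + u * x 2, x 2]) 1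
      = t * (x 1 + u * x 2) := by simp
  have h0 : (t • ![x 0 + u * x 1 + (v + u^2/2) * x 2, x 1 + u * x 2, x 2]) 0
      = t * (x 0 + u * x 1 + (v + u^2/2) * x 2) := by simp
  unfold ψ
  rw [h0, h1, h2, Prod.mk_sub_mk, Prod.mk_sub_mk]
  refine Prod.ext ?_ (Prod.ext ?_ ?_)
  · rw [norm_mul, Real.log_mul habs habx]
    ring
  · rw [mul_div_mul_left _ _ ht]
    field_simp
    ring
  · have hA : (x 0 + u * x 1 + (v + u ^ 2 / 2) * x 2) / x 2
        = x 0 / x 2 + u * (x 1 / x 2) + (v + u ^ 2 / 2) := by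
      rw [add_div, add_div, mul_div_assoc, mul_div_cancel_right₀ _ hx]
    have hB : (x 1 + u * x 2) / x 2 = x 1 / x 2 + u := by
      rw [add_div, mul_div_assoc, div_self hx, mul_one]
    rw [mul_div_mul_left _ _ ht, mul_div_mul_left _ _ ht, hA, hB]
    ring

end ToepAux

theorem toeplitz3_not_hypercyclic
    (a : Fin 3 → Fin 3 → ℂ) (x : Fin 3 → ℂ) :
    ¬ Dense {y : Fin 3 → ℂ | ∃ k : Fin 3 → ℕ,
        y = ((!![a 0 0, a 0 1, a 0 2; 0, a 0 0, a 0 1; 0, 0, a 0 0]) ^ k 0 *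
             (!![a 1 0, a 1 1, a 1 2; 0, a 1 0, a 1 1; 0, 0, a 1 0]) ^ k 1 *
             (!![a 2 0, a 2 1, a 2 2; 0, a 2 0, a 2 1; 0, 0, a 2 0]) ^ k 2).mulVec x} := by
  intro hD
  have hTT0 : (!![a 0 0, a 0 1, a 0 2; 0, a 0 0, a 0 1; 0, 0, a 0 0])
      = TT (a 0 0) (a 0 1) (a 0 2) := rfl
  have hTT1 : (!![a 1 0, a 1 1, a 1 2; 0, a 1 0, a 1 1; 0, 0, a 1 0])
      = TT (a 1 0) (a 1 1) (a 1 2) := rfl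
  have hTT2 : (!![a 2 0, a 2 1, a 2 2; 0, a 2 0, a 2 1; 0, 0, a 2 0])
      = TT (a 2 0) (a 2 1) (a 2 2) := rfl
  have hopen2 : IsOpen {y : Fin 3 → ℂ | y 2 ≠ 0} :=
    isOpen_compl_singleton.preimage (continuous_apply 2)
  have hlast : ∀ k : Fin 3 → ℕ,
      ((TT (a 0 0) (a 0 1) (a 0 2) ^ k 0 * TT (a 1 0) (a 1 1) (a 1 2) ^ k 1 *
        TT (a 2 0) (a 2 1) (a 2 2) ^ k 2).mulVec x) 2
      = (a 0 0 ^ k 0 * a 1 0 ^ k 1 * a 2 0 ^ k 2) * x 2 := by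
    intro k
    obtain ⟨B0, C0, h0⟩ := TT_pow_exists (a 0 0) (a 0 1) (a 0 2) (k 0)
    obtain ⟨B1, C1, h1⟩ := TT_pow_exists (a 1 0) (a 1 1) (a 1 2) (k 1)
    obtain ⟨B2, C2, h2⟩ := TT_pow_exists (a 2 0) (a 2 1) (a 2 2) (k 2)
    rw [h0, h1, h2, TT_mul, TT_mul, TT_mulVec]
    simp
  by_cases hx : x 2 = 0
  · obtain ⟨z, hzS, hz2⟩ := hD.exists_mem_open hopen2 ⟨![0,0,1], by simp⟩
    obtain ⟨k, hk⟩ := hzS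
    apply hz2
    show z 2 = 0
    rw [hk, hTT0, hTT1, hTT2, hlast k, hx, mul_zero]
  · -- main case
    set w : Fin 3 → ℝ × ℂ × ℂ :=
      fun i => (Real.log (‖a i 0‖), βa a i, γa a i) with hw
    set W := Submodule.span ℝ ({w 0, w 1, w 2} : Set (ℝ × ℂ × ℂ)) with hWdef
    have hfr : Module.finrank ℝ (ℝ × ℂ × ℂ) = 5 := by
      simp [Module.finrank_prod, Complex.finrank_real_complex]
    have hlt : W < ⊤ := by
      classical
      apply span_lt_top_of_card_lt_finrank
      rw [hfr, Set.toFinset_insert, Set.toFinset_insert, Set.toFinset_singleton]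
      have h1 := Finset.card_insert_le (w 0) (insert (w 1) ({w 2} : Finset _))
      have h2 := Finset.card_insert_le (w 1) ({w 2} : Finset _)
      have h3 : ({w 2} : Finset (ℝ × ℂ × ℂ)).card = 1 := Finset.card_singleton _
      omega
    obtain ⟨q, -, hq⟩ := SetLike.exists_of_lt hlt
    set p := ψ x + q with hp
    set y₀ : Fin 3 → ℂ := ![(p.2.2 + p.2.1^2/2) * Complex.exp (p.1 : ℂ),
      p.2.1 * Complex.exp (p.1 : ℂ), Complex.exp (p.1 : ℂ)] with hy₀
    have hexp : Complex.exp ((p.1 : ℝ) : ℂ) ≠ 0 := Complex.exp_ne_zero _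
    have e2 : y₀ 2 = Complex.exp (p.1 : ℂ) := by simp [hy₀]
    have hψy₀ : ψ y₀ = p := by
      have e1 : y₀ 1 = p.2.1 * Complex.exp (p.1 : ℂ) := by simp [hy₀]
      have e0 : y₀ 0 = (p.2.2 + p.2.1^2/2) * Complex.exp (p.1 : ℂ) := by simp [hy₀]
      have habs : ‖Complex.exp ((p.1 : ℝ) : ℂ)‖ = Real.exp p.1 := by
        rw [Complex.norm_exp]
        simp
      unfold ψ
      rw [e0, e1, e2]
      refine Prod.ext ?_ (Prod.ext ?_ ?_)
      · simp [habs, Real.log_exp]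
      · simp [mul_div_cancel_right₀ _ hexp]
      · simp only [mul_div_cancel_right₀ _ hexp]
        ring
    set U : Set (Fin 3 → ℂ) := {y | y 2 ≠ 0 ∧ ψ y - ψ x ∉ W} with hUdef
    have hWclosed : IsClosed (W : Set (ℝ × ℂ × ℂ)) := Submodule.closed_of_finiteDimensional W
    have hcont : ContinuousOn (fun y : Fin 3 → ℂ => ψ y - ψ x) {y : Fin 3 → ℂ | y 2 ≠ 0} := by
      apply ContinuousOn.sub ?_ continuousOn_const
      have hc0 : ContinuousOn (fun y : Fin 3 → ℂ => y 0) {y : Fin 3 → ℂ | y 2 ≠ 0} :=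
        (continuous_apply 0).continuousOn
      have hc1 : ContinuousOn (fun y : Fin 3 → ℂ => y 1) {y : Fin 3 → ℂ | y 2 ≠ 0} :=
        (continuous_apply 1).continuousOn
      have hc2 : ContinuousOn (fun y : Fin 3 → ℂ => y 2) {y : Fin 3 → ℂ | y 2 ≠ 0} :=
        (continuous_apply 2).continuousOn
      have hdiv1 : ContinuousOn (fun y : Fin 3 → ℂ => y 1 / y 2) {y : Fin 3 → ℂ | y 2 ≠ 0} :=
        hc1.div hc2 (fun y hy => hy)
      have hdiv0 : ContinuousOn (fun y : Fin 3 → ℂ => y 0 / y 2) {y : Fin 3 → ℂ | y 2 ≠ 0} :=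
        hc0.div hc2 (fun y hy => hy)
      have hlog : ContinuousOn (fun y : Fin 3 → ℂ => Real.log (‖y 2‖))
          {y : Fin 3 → ℂ | y 2 ≠ 0} := by
        intro y hy
        have hy' : ‖y 2‖ ≠ 0 := by simpa using hy
        have hA : Continuous (fun y : Fin 3 → ℂ => ‖y 2‖) :=
          continuous_norm.comp (continuous_apply (2 : Fin 3))
        have hcc : ContinuousAt (Real.log ∘ fun y : Fin 3 → ℂ => ‖y 2‖) y :=
          ContinuousAt.comp (Real.continuousAt_log hy') hA.continuousAt
        exact (hcc : ContinuousAt (fun y : Fin 3 → ℂ => Real.log (‖y 2‖)) y).continuousWithinAt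
      exact hlog.prodMk (hdiv1.prodMk (hdiv0.sub ((hdiv1.pow 2).div_const 2)))
    have hUopen : IsOpen U := by
      have hU2 : U = {y : Fin 3 → ℂ | y 2 ≠ 0} ∩ (fun y => ψ y - ψ x) ⁻¹' (↑W)ᶜ := rfl
      rw [hU2]
      exact hcont.isOpen_inter_preimage hopen2 hWclosed.isOpen_compl
    have hy₀U : y₀ ∈ U := by
      constructor
      · show y₀ 2 ≠ 0
        rw [e2]
        exact hexp
      · rw [hψy₀, hp]
        simpa [add_sub_cancel_left] using hq
    obtain ⟨z, hzS, hzU⟩ := hD.exists_mem_open hUopen ⟨y₀, hy₀U⟩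
    obtain ⟨k, hk⟩ := hzS
    rw [hTT0, hTT1, hTT2] at hk
    by_cases hlam : a 0 0 ^ k 0 * a 1 0 ^ k 1 * a 2 0 ^ k 2 = 0
    · exact hzU.1 (by rw [hk, hlast k, hlam, zero_mul])
    · have h3 := mul_ne_zero_iff.mp hlam
      have h12 := mul_ne_zero_iff.mp h3.1
      have hf : ∀ i, a i 0 ^ k i ≠ 0 := by
        intro i
        fin_cases i
        exacts [h12.1, h12.2, h3.2]
      have hψz : ψ z - ψ x
          = (Real.log (‖a 0 0 ^ k 0 * a 1 0 ^ k 1 * a 2 0 ^ k 2‖),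
             ((k 0 : ℂ) * βa a 0 + (k 1 : ℂ) * βa a 1 + (k 2 : ℂ) * βa a 2),
             ((k 0 : ℂ) * γa a 0 + (k 1 : ℂ) * γa a 1 + (k 2 : ℂ) * γa a 2)) := by
        rw [hk, prod_eq a k hf, Matrix.smul_mulVec, EE_mulVec,
          psi_orbit _ _ _ _ hlam hx]
      have habsk : ∀ i, ‖a i 0‖ ^ k i ≠ 0 := by
        intro i
        rw [← norm_pow]
        simpa [map_eq_zero] using hf i
      have hlogs : Real.log (‖a 0 0 ^ k 0 * a 1 0 ^ k 1 * a 2 0 ^ k 2‖)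
          = (k 0 : ℝ) * Real.log (‖a 0 0‖)
            + (k 1 : ℝ) * Real.log (‖a 1 0‖)
            + (k 2 : ℝ) * Real.log (‖a 2 0‖) := by
        rw [norm_mul, norm_mul, norm_pow, norm_pow, norm_pow,
          Real.log_mul (mul_ne_zero (habsk 0) (habsk 1)) (habsk 2),
          Real.log_mul (habsk 0) (habsk 1), Real.log_pow, Real.log_pow, Real.log_pow]
      have hsum : ((k 0 : ℝ) * Real.log (‖a 0 0‖)
            + (k 1 : ℝ) * Real.log (‖a 1 0‖)
            + (k 2 : ℝ) * Real.log (‖a 2 0‖),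
             ((k 0 : ℂ) * βa a 0 + (k 1 : ℂ) * βa a 1 + (k 2 : ℂ) * βa a 2),
             ((k 0 : ℂ) * γa a 0 + (k 1 : ℂ) * γa a 1 + (k 2 : ℂ) * γa a 2))
          = (k 0 : ℝ) • w 0 + (k 1 : ℝ) • w 1 + (k 2 : ℝ) • w 2 := by
        simp only [hw, Prod.smul_mk, Prod.mk_add_mk, smul_eq_mul, Complex.real_smul]
        push_cast
        rfl
      apply hzU.2
      rw [hψz, hlogs, hsum]
      refine Submodule.add_mem _ (Submodule.add_mem _ ?_ ?_) ?_ <;>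
        exact Submodule.smul_mem _ _ (Submodule.subset_span (by simp))
end

section
/- Let A_1, A_2, A_3, A_4 be 4×4 upper triangular Toeplitz complex matrices with nonzero diagonal entries a_{j,1}. The 4-tuple (A_1, A_2, A_3, A_4) is hypercyclic on ℂ⁴ if and only if the set of vectors (Σ_{j=1}^4 k_j(a_{j,4}/a_{j,1} − a_{j,2}a_{j,3}/a_{j,1}² + (1/3)a_{j,2}³/a_{j,1}³), Σ_{j=1}^4 k_j(a_{j,3}/a_{j,1} − (1/2)a_{j,2}²/a_{j,1}²), Σ_{j=1}^4 k_j a_{j,2}/a_{j,1}, a_{1,1}^{k_1}a_{2,1}^{k_2}a_{3,1}^{k_3}a_{4,1}^{k_4}) over all k_1,k_2,k_3,k_4 ∈ ℕ is dense in ℂ⁴. -/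
open Matrix

noncomputable def Th (l t1 t2 t3 : ℂ) : Matrix (Fin 4) (Fin 4) ℂ :=
  !![l, l*t1, l*(t2+t1^2/2), l*(t3+t1*t2+t1^3/6);
     0, l, l*t1, l*(t2+t1^2/2);
     0, 0, l, l*t1;
     0, 0, 0, l]

lemma Th_mul (l m t1 t2 t3 s1 s2 s3 : ℂ) :
    Th l t1 t2 t3 * Th m s1 s2 s3 = Th (l*m) (t1+s1) (t2+s2) (t3+s3) := by
  ext i j
  fin_cases i <;> fin_cases j <;>
    simp [Th, Matrix.mul_apply, Fin.sum_univ_four, Matrix.vecHead, Matrix.vecTail] <;> ring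

lemma Th_one : Th 1 0 0 0 = 1 := by
  ext i j
  fin_cases i <;> fin_cases j <;>
    simp [Th, Matrix.one_apply, Matrix.vecHead, Matrix.vecTail]

lemma Th_pow (l t1 t2 t3 : ℂ) (k : ℕ) :
    (Th l t1 t2 t3)^k = Th (l^k) (k*t1) (k*t2) (k*t3) := by
  induction k with
  | zero => simp [Th_one]
  | succ n ih =>
    rw [pow_succ, ih, Th_mul]
    congr 1 <;> push_cast <;> ring

lemma Th_mulVec (l t1 t2 t3 : ℂ) (x : Fin 4 → ℂ) :
    (Th l t1 t2 t3).mulVec x =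
      ![l*(x 0 + t1*x 1 + (t2+t1^2/2)*x 2 + (t3+t1*t2+t1^3/6)*x 3),
        l*(x 1 + t1*x 2 + (t2+t1^2/2)*x 3),
        l*(x 2 + t1*x 3),
        l*x 3] := by
  funext i
  fin_cases i <;>
    simp [Th, Matrix.mulVec, dotProduct, Fin.sum_univ_four, Matrix.vecHead, Matrix.vecTail] <;>
    ring

lemma A_eq (a0 a1 a2 a3 : ℂ) (h : a0 ≠ 0) :
    !![a0,a1,a2,a3;0,a0,a1,a2;0,0,a0,a1;0,0,0,a0] =
    Th a0 (a1/a0) (a2/a0 - (1/2)*a1^2/a0^2)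
       (a3/a0 - a1*a2/a0^2 + (1/3)*a1^3/a0^3) := by
  ext i j
  fin_cases i <;> fin_cases j <;>
    simp [Th, Matrix.vecHead, Matrix.vecTail] <;>
    rw [mul_comm a0, ← div_eq_iff h] <;> ring

noncomputable def Fmap (x w : Fin 4 → ℂ) : Fin 4 → ℂ :=
  ![w 3*(x 0 + w 2*x 1 + (w 1+(w 2)^2/2)*x 2 + (w 0 + w 2*w 1 + (w 2)^3/6)*x 3),
    w 3*(x 1 + w 2*x 2 + (w 1+(w 2)^2/2)*x 3),
    w 3*(x 2 + w 2*x 3),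
    w 3*x 3]

noncomputable def Gaux (x : Fin 4 → ℂ) (p : (Fin 4 → ℂ) × ℂ) : Fin 4 → ℂ :=
  let c := (x 3)⁻¹
  let t1 := (p.1 2 * x 3 * p.2 - x 2) * c
  let t2 := (p.1 1 * x 3 * p.2 - x 1 - t1 * x 2) * c - t1^2/2
  let t3 := (p.1 0 * x 3 * p.2 - x 0 - t1*x 1 - (t2+t1^2/2)*x 2) * c - t1*t2 - t1^3/6
  ![t3, t2, t1, p.1 3 * c]

noncomputable def Gmap (x y : Fin 4 → ℂ) : Fin 4 → ℂ := Gaux x (y, (y 3)⁻¹)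

lemma vec_eta (y : Fin 4 → ℂ) : y = ![y 0, y 1, y 2, y 3] := by
  funext i; fin_cases i <;> rfl

lemma FG (x y : Fin 4 → ℂ) (hx : x 3 ≠ 0) (hy : y 3 ≠ 0) : Fmap x (Gmap x y) = y := by
  conv_rhs => rw [vec_eta y]
  simp only [Fmap, Gmap, Gaux, Matrix.cons_val_zero, Matrix.cons_val_one, Matrix.head_cons,
    Matrix.cons_val_two, Matrix.tail_cons, Matrix.cons_val_three]
  simp only [Matrix.vecCons]
  rw [Fin.cons_inj, Fin.cons_inj, Fin.cons_inj, Fin.cons_inj]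
  refine ⟨?_, ?_, ?_, ?_, rfl⟩
  · obtain ⟨T1, hT1⟩ : ∃ T1, T1 = (y 2 * x 3 * (y 3)⁻¹ - x 2) * (x 3)⁻¹ := ⟨_, rfl⟩
    rw [← hT1]
    obtain ⟨T2, hT2⟩ : ∃ T2, T2 = (y 1 * x 3 * (y 3)⁻¹ - x 1 - T1 * x 2) * (x 3)⁻¹ - T1 ^ 2 / 2 :=
      ⟨_, rfl⟩
    rw [← hT2]
    linear_combination (y 0 * y 3 * (y 3)⁻¹ + y 3 * (x 3)⁻¹ *
        (y 0 * x 3 * (y 3)⁻¹ - x 0 - T1 * x 1 - (T2 + T1^2/2) * x 2)) * mul_inv_cancel₀ hx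
      + y 0 * mul_inv_cancel₀ hy
  · obtain ⟨T1, hT1⟩ : ∃ T1, T1 = (y 2 * x 3 * (y 3)⁻¹ - x 2) * (x 3)⁻¹ := ⟨_, rfl⟩
    rw [← hT1]
    linear_combination (y 1 * y 3 * (y 3)⁻¹ + y 3 * (x 3)⁻¹ *
        (y 1 * x 3 * (y 3)⁻¹ - x 1 - T1 * x 2)) * mul_inv_cancel₀ hx
      + y 1 * mul_inv_cancel₀ hy
  · field_simp
    ring
  · field_simp

lemma GF (x w : Fin 4 → ℂ) (hx : x 3 ≠ 0) (hw : w 3 ≠ 0) : Gmap x (Fmap x w) = w := by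
  have hc : ∀ E : ℂ, w 3 * E * x 3 * (w 3 * x 3)⁻¹ = E := by
    intro E
    field_simp
  have ht1 : (w 3 * (x 2 + w 2 * x 3) * x 3 * (w 3 * x 3)⁻¹ - x 2) * (x 3)⁻¹ = w 2 := by
    rw [hc]
    field_simp
    ring
  have ht2 : (w 3 * (x 1 + w 2 * x 2 + (w 1 + w 2 ^ 2 / 2) * x 3) * x 3 * (w 3 * x 3)⁻¹
      - x 1 - w 2 * x 2) * (x 3)⁻¹ - w 2 ^ 2 / 2 = w 1 := by
    rw [hc]
    field_simp
    ring
  have ht3 : (w 3 * (x 0 + w 2 * x 1 + (w 1 + w 2 ^ 2 / 2) * x 2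
        + (w 0 + w 2 * w 1 + w 2 ^ 3 / 6) * x 3) * x 3 * (w 3 * x 3)⁻¹
      - x 0 - w 2 * x 1 - (w 1 + w 2 ^ 2 / 2) * x 2) * (x 3)⁻¹
      - w 2 * w 1 - w 2 ^ 3 / 6 = w 0 := by
    rw [hc]
    field_simp
    ring
  conv_rhs => rw [vec_eta w]
  simp only [Fmap, Gmap, Gaux, Matrix.cons_val_zero, Matrix.cons_val_one, Matrix.head_cons,
    Matrix.cons_val_two, Matrix.tail_cons, Matrix.cons_val_three]
  simp only [Matrix.vecCons]
  rw [Fin.cons_inj, Fin.cons_inj, Fin.cons_inj, Fin.cons_inj]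
  refine ⟨?_, ?_, ?_, ?_, rfl⟩
  · rw [ht1, ht2, ht3]
  · rw [ht1, ht2]
  · rw [ht1]
  · field_simp

lemma F_cont (x : Fin 4 → ℂ) : Continuous (Fmap x) := by
  have c0 : Continuous fun w : Fin 4 → ℂ =>
      w 3*(x 0 + w 2*x 1 + (w 1+(w 2)^2/2)*x 2 + (w 0 + w 2*w 1 + (w 2)^3/6)*x 3) := by fun_prop
  have c1 : Continuous fun w : Fin 4 → ℂ =>
      w 3*(x 1 + w 2*x 2 + (w 1+(w 2)^2/2)*x 3) := by fun_prop
  have c2 : Continuous fun w : Fin 4 → ℂ => w 3*(x 2 + w 2*x 3) := by fun_prop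
  have c3 : Continuous fun w : Fin 4 → ℂ => w 3*x 3 := by fun_prop
  apply continuous_pi
  intro i
  fin_cases i
  · exact c0
  · exact c1
  · exact c2
  · exact c3

lemma G_contAt (x : Fin 4 → ℂ) (y : Fin 4 → ℂ) (hy : y 3 ≠ 0) :
    ContinuousAt (Gmap x) y := by
  have h2 : Continuous (Gaux x) := by
    have c2 : Continuous fun p : (Fin 4 → ℂ) × ℂ => (p.1 2 * x 3 * p.2 - x 2) * (x 3)⁻¹ := by
      fun_prop
    have c1 : Continuous fun p : (Fin 4 → ℂ) × ℂ =>
        (p.1 1 * x 3 * p.2 - x 1 - ((p.1 2 * x 3 * p.2 - x 2) * (x 3)⁻¹) * x 2) * (x 3)⁻¹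
          - ((p.1 2 * x 3 * p.2 - x 2) * (x 3)⁻¹)^2/2 := by fun_prop
    have c0 : Continuous fun p : (Fin 4 → ℂ) × ℂ =>
        (p.1 0 * x 3 * p.2 - x 0 - ((p.1 2 * x 3 * p.2 - x 2) * (x 3)⁻¹)*x 1
            - (((p.1 1 * x 3 * p.2 - x 1 - ((p.1 2 * x 3 * p.2 - x 2) * (x 3)⁻¹) * x 2) * (x 3)⁻¹
                - ((p.1 2 * x 3 * p.2 - x 2) * (x 3)⁻¹)^2/2)
              + ((p.1 2 * x 3 * p.2 - x 2) * (x 3)⁻¹)^2/2)*x 2) * (x 3)⁻¹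
          - ((p.1 2 * x 3 * p.2 - x 2) * (x 3)⁻¹)
            * ((p.1 1 * x 3 * p.2 - x 1 - ((p.1 2 * x 3 * p.2 - x 2) * (x 3)⁻¹) * x 2) * (x 3)⁻¹
                - ((p.1 2 * x 3 * p.2 - x 2) * (x 3)⁻¹)^2/2)
          - ((p.1 2 * x 3 * p.2 - x 2) * (x 3)⁻¹)^3/6 := by fun_prop
    have c3 : Continuous fun p : (Fin 4 → ℂ) × ℂ => p.1 3 * (x 3)⁻¹ := by fun_prop
    apply continuous_pi
    intro i
    fin_cases i
    · exact c0
    · exact c1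
    · exact c2
    · exact c3
  have h1 : ContinuousAt (fun y : Fin 4 → ℂ => (y, (y 3)⁻¹)) y :=
    ContinuousAt.prodMk continuousAt_id (((continuous_apply (3 : Fin 4)).continuousAt).inv₀ hy)
  exact (h2.continuousAt).comp h1

lemma dense_aux {α β : Type*} [TopologicalSpace α] [TopologicalSpace β]
    {f : α → β} {g : β → α} {S : Set α} {V : Set β} (hV : Dense V)
    (hc : ∀ y ∈ V, ContinuousAt f (g y)) (hfg : ∀ y ∈ V, f (g y) = y)
    (hS : Dense S) : Dense (f '' S) := by
  have h1 : V ⊆ closure (f '' S) := by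
    intro y hy
    have h2 := (hc y hy).continuousWithinAt.mem_closure_image (hS (g y))
    rwa [hfg y hy] at h2
  intro z
  have h3 := closure_mono h1 (hV z)
  rwa [closure_closure] at h3

lemma denseU : Dense {y : Fin 4 → ℂ | y 3 ≠ 0} := by
  have h : Dense ((Function.eval (3 : Fin 4) : (Fin 4 → ℂ) → ℂ) ⁻¹' {(0:ℂ)}ᶜ) :=
    (dense_compl_singleton (0:ℂ)).preimage (isOpenMap_eval 3)
  exact h
noncomputable def Lc (a : Fin 4 → Fin 4 → ℂ) (k : Fin 4 → ℕ) : ℂ := ∏ j : Fin 4, a j 0 ^ k j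

noncomputable def Tc1 (a : Fin 4 → Fin 4 → ℂ) (k : Fin 4 → ℕ) : ℂ :=
  ∑ j : Fin 4, (k j : ℂ) * (a j 1 / a j 0)

noncomputable def Tc2 (a : Fin 4 → Fin 4 → ℂ) (k : Fin 4 → ℕ) : ℂ :=
  ∑ j : Fin 4, (k j : ℂ) * (a j 2 / a j 0 - (1/2) * (a j 1)^2 / (a j 0)^2)

noncomputable def Tc3 (a : Fin 4 → Fin 4 → ℂ) (k : Fin 4 → ℕ) : ℂ :=
  ∑ j : Fin 4, (k j : ℂ) *
    (a j 3 / a j 0 - a j 1 * a j 2 / (a j 0)^2 + (1/3) * (a j 1)^3 / (a j 0)^3)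

noncomputable def wvec (a : Fin 4 → Fin 4 → ℂ) (k : Fin 4 → ℕ) : Fin 4 → ℂ :=
  ![Tc3 a k, Tc2 a k, Tc1 a k, Lc a k]

lemma Th_congr {l l' t1 t1' t2 t2' t3 t3' : ℂ} (h0 : l = l') (h1 : t1 = t1') (h2 : t2 = t2')
    (h3 : t3 = t3') : Th l t1 t2 t3 = Th l' t1' t2' t3' := by
  rw [h0, h1, h2, h3]

theorem toeplitz4_hypercyclic_iff
    (a : Fin 4 → Fin 4 → ℂ) (ha : ∀ j, a j 0 ≠ 0) :
    (∃ x : Fin 4 → ℂ, Dense {y : Fin 4 → ℂ | ∃ k : Fin 4 → ℕ,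
        y = ((!![a 0 0, a 0 1, a 0 2, a 0 3; 0, a 0 0, a 0 1, a 0 2;
                 0, 0, a 0 0, a 0 1; 0, 0, 0, a 0 0]) ^ k 0 *
             (!![a 1 0, a 1 1, a 1 2, a 1 3; 0, a 1 0, a 1 1, a 1 2;
                 0, 0, a 1 0, a 1 1; 0, 0, 0, a 1 0]) ^ k 1 *
             (!![a 2 0, a 2 1, a 2 2, a 2 3; 0, a 2 0, a 2 1, a 2 2;
                 0, 0, a 2 0, a 2 1; 0, 0, 0, a 2 0]) ^ k 2 *
             (!![a 3 0, a 3 1, a 3 2, a 3 3; 0, a 3 0, a 3 1, a 3 2;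
                 0, 0, a 3 0, a 3 1; 0, 0, 0, a 3 0]) ^ k 3).mulVec x})
    ↔ Dense {v : Fin 4 → ℂ | ∃ k : Fin 4 → ℕ,
        v = ![∑ j : Fin 4, (k j : ℂ) *
                (a j 3 / a j 0 - a j 1 * a j 2 / (a j 0)^2 + (1/3) * (a j 1)^3 / (a j 0)^3),
              ∑ j : Fin 4, (k j : ℂ) * (a j 2 / a j 0 - (1/2) * (a j 1)^2 / (a j 0)^2),
              ∑ j : Fin 4, (k j : ℂ) * (a j 1 / a j 0),
              ∏ j : Fin 4, a j 0 ^ k j]} := by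
  have hM : ∀ k : Fin 4 → ℕ,
      ((!![a 0 0, a 0 1, a 0 2, a 0 3; 0, a 0 0, a 0 1, a 0 2;
            0, 0, a 0 0, a 0 1; 0, 0, 0, a 0 0]) ^ k 0 *
        (!![a 1 0, a 1 1, a 1 2, a 1 3; 0, a 1 0, a 1 1, a 1 2;
            0, 0, a 1 0, a 1 1; 0, 0, 0, a 1 0]) ^ k 1 *
        (!![a 2 0, a 2 1, a 2 2, a 2 3; 0, a 2 0, a 2 1, a 2 2;
            0, 0, a 2 0, a 2 1; 0, 0, 0, a 2 0]) ^ k 2 *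
        (!![a 3 0, a 3 1, a 3 2, a 3 3; 0, a 3 0, a 3 1, a 3 2;
            0, 0, a 3 0, a 3 1; 0, 0, 0, a 3 0]) ^ k 3) =
      Th (Lc a k) (Tc1 a k) (Tc2 a k) (Tc3 a k) := by
    intro k
    rw [A_eq _ _ _ _ (ha 0), A_eq _ _ _ _ (ha 1), A_eq _ _ _ _ (ha 2), A_eq _ _ _ _ (ha 3)]
    simp only [Th_pow, Th_mul]
    apply Th_congr
    · simp only [Lc, Fin.prod_univ_four]
    · simp only [Tc1, Fin.sum_univ_four]
    · simp only [Tc2, Fin.sum_univ_four]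
    · simp only [Tc3, Fin.sum_univ_four]
  have hLne : ∀ k, Lc a k ≠ 0 := fun k =>
    Finset.prod_ne_zero_iff.mpr fun j _ => pow_ne_zero _ (ha j)
  have hFw : ∀ (x : Fin 4 → ℂ) (k : Fin 4 → ℕ),
      Fmap x (wvec a k) = (Th (Lc a k) (Tc1 a k) (Tc2 a k) (Tc3 a k)).mulVec x := by
    intro x k
    rw [Th_mulVec]
    rfl
  have horb : ∀ x : Fin 4 → ℂ, {y : Fin 4 → ℂ | ∃ k : Fin 4 → ℕ,
        y = ((!![a 0 0, a 0 1, a 0 2, a 0 3; 0, a 0 0, a 0 1, a 0 2;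
                 0, 0, a 0 0, a 0 1; 0, 0, 0, a 0 0]) ^ k 0 *
             (!![a 1 0, a 1 1, a 1 2, a 1 3; 0, a 1 0, a 1 1, a 1 2;
                 0, 0, a 1 0, a 1 1; 0, 0, 0, a 1 0]) ^ k 1 *
             (!![a 2 0, a 2 1, a 2 2, a 2 3; 0, a 2 0, a 2 1, a 2 2;
                 0, 0, a 2 0, a 2 1; 0, 0, 0, a 2 0]) ^ k 2 *
             (!![a 3 0, a 3 1, a 3 2, a 3 3; 0, a 3 0, a 3 1, a 3 2;
                 0, 0, a 3 0, a 3 1; 0, 0, 0, a 3 0]) ^ k 3).mulVec x} =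
      Fmap x '' {v : Fin 4 → ℂ | ∃ k : Fin 4 → ℕ, v = wvec a k} := by
    intro x
    ext yy
    constructor
    · rintro ⟨k, rfl⟩
      exact ⟨wvec a k, ⟨k, rfl⟩, by rw [hM k]; exact hFw x k⟩
    · rintro ⟨v, ⟨k, rfl⟩, rfl⟩
      exact ⟨k, by rw [hM k]; exact hFw x k⟩
  constructor
  · rintro ⟨x, hx⟩
    rw [horb x] at hx
    by_cases hx3 : x 3 = 0
    · exfalso
      have hsub : Fmap x '' {v : Fin 4 → ℂ | ∃ k : Fin 4 → ℕ, v = wvec a k} ⊆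
          {y : Fin 4 → ℂ | y 3 = 0} := by
        rintro y ⟨v, _, rfl⟩
        show v 3 * x 3 = 0
        rw [hx3, mul_zero]
      have hcl : IsClosed {y : Fin 4 → ℂ | y 3 = 0} :=
        isClosed_eq (continuous_apply 3) continuous_const
      have h2 : (![0,0,0,1] : Fin 4 → ℂ) ∈ {y : Fin 4 → ℂ | y 3 = 0} := by
        rw [← hcl.closure_eq]
        exact closure_mono hsub (hx _)
      exact one_ne_zero (h2 : (1:ℂ) = 0)
    · show Dense {v : Fin 4 → ℂ | ∃ k : Fin 4 → ℕ, v = wvec a k}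
      have hkey : {v : Fin 4 → ℂ | ∃ k : Fin 4 → ℕ, v = wvec a k} =
          Gmap x '' (Fmap x '' {v : Fin 4 → ℂ | ∃ k : Fin 4 → ℕ, v = wvec a k}) := by
        ext v
        constructor
        · intro hv
          refine ⟨Fmap x v, Set.mem_image_of_mem _ hv, ?_⟩
          obtain ⟨k, rfl⟩ := hv
          exact GF x _ hx3 (show Lc a k ≠ 0 from hLne k)
        · rintro ⟨u, ⟨v', ⟨k, rfl⟩, rfl⟩, rfl⟩
          rw [GF x _ hx3 (show Lc a k ≠ 0 from hLne k)]
          exact ⟨k, rfl⟩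
      rw [hkey]
      refine dense_aux (g := Fmap x) denseU ?_ ?_ hx
      · intro y hy
        exact G_contAt x _ (show y 3 * x 3 ≠ 0 from mul_ne_zero hy hx3)
      · intro y hy
        exact GF x y hx3 hy
  · intro hS
    refine ⟨![0,0,0,1], ?_⟩
    rw [horb]
    have hx3 : (![0,0,0,1] : Fin 4 → ℂ) 3 ≠ 0 := one_ne_zero
    exact dense_aux denseU (fun y _ => (F_cont _).continuousAt) (fun y hy => FG _ y hx3 hy) hS
end

section
/- No 4-tuple (A_1, A_2, A_3, A_4) of 4×4 upper triangular Toeplitz complex matrices is hypercyclic on ℂ⁴. -/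
open Matrix Module

noncomputable section Toep4Aux

/-- upper triangular Toeplitz 4×4 matrix -/
def Tm (c0 c1 c2 c3 : ℂ) : Matrix (Fin 4) (Fin 4) ℂ :=
  !![c0,c1,c2,c3; 0,c0,c1,c2; 0,0,c0,c1; 0,0,0,c0]

lemma Tm_one : Tm 1 0 0 0 = 1 := by
  ext i j; fin_cases i <;> fin_cases j <;>
    simp [Tm, Matrix.one_apply, Matrix.vecHead, Matrix.vecTail]

lemma Tm_mul (c0 c1 c2 c3 d0 d1 d2 d3 : ℂ) :
    Tm c0 c1 c2 c3 * Tm d0 d1 d2 d3 =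
      Tm (c0*d0) (c0*d1+c1*d0) (c0*d2+c1*d1+c2*d0) (c0*d3+c1*d2+c2*d1+c3*d0) := by
  ext i j
  fin_cases i <;> fin_cases j <;>
    simp [Tm, Matrix.mul_apply, Fin.sum_univ_four, Matrix.vecHead, Matrix.vecTail] <;> ring

lemma Tm_mulVec (c0 c1 c2 c3 : ℂ) (x : Fin 4 → ℂ) :
    (Tm c0 c1 c2 c3).mulVec x =
      ![c0*x 0 + c1*x 1 + c2*x 2 + c3*x 3, c0*x 1 + c1*x 2 + c2*x 3,
        c0*x 2 + c1*x 3, c0*x 3] := by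
  funext i
  fin_cases i <;>
    simp [Tm, Matrix.mulVec, dotProduct, Fin.sum_univ_four, Matrix.vecHead, Matrix.vecTail]

/-- "logarithmic" invariant of an invertible Toeplitz matrix -/
def Fc (c0 c1 c2 : ℂ) : ℂ × ℂ := (c1/c0, c2/c0 - (c1/c0)^2/2)

lemma Fc_mul {c0 d0 : ℂ} (c1 c2 d1 d2 : ℂ) (h0 : c0 ≠ 0) (h0' : d0 ≠ 0) :
    Fc (c0*d0) (c0*d1+c1*d0) (c0*d2+c1*d1+c2*d0) = Fc c0 c1 c2 + Fc d0 d1 d2 := by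
  have h1 : (c0*d1+c1*d0)/(c0*d0) = c1/c0 + d1/d0 := by field_simp; ring
  have h2 : (c0*d2+c1*d1+c2*d0)/(c0*d0) = c2/c0 + (c1/c0)*(d1/d0) + d2/d0 := by
    field_simp; ring
  simp only [Fc, Prod.mk_add_mk, Prod.mk.injEq, h1, h2]
  exact ⟨trivial, by ring⟩

lemma Tm_pow (c0 c1 c2 c3 : ℂ) (k : ℕ) :
    ∃ e1 e2 e3 : ℂ, Tm c0 c1 c2 c3 ^ k = Tm (c0^k) e1 e2 e3 ∧
      (c0 ^ k ≠ 0 → Fc (c0^k) e1 e2 = k • Fc c0 c1 c2) := by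
  induction k with
  | zero =>
    exact ⟨0, 0, 0, by rw [pow_zero, pow_zero, Tm_one], by intro _; simp [Fc]⟩
  | succ k ih =>
    obtain ⟨e1, e2, e3, hA, hF⟩ := ih
    refine ⟨c0^k*c1+e1*c0, c0^k*c2+e1*c1+e2*c0, c0^k*c3+e1*c2+e2*c1+e3*c0, ?_, ?_⟩
    · rw [pow_succ, hA, Tm_mul, pow_succ]
    · intro h
      have hc0 : c0 ≠ 0 := fun h' => h (by simp [h'])
      have hk : c0 ^ k ≠ 0 := pow_ne_zero _ hc0
      rw [pow_succ, Fc_mul e1 e2 c1 c2 hk hc0, hF hk, succ_nsmul]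

lemma rep (a : Fin 4 → Fin 4 → ℂ) (k : Fin 4 → ℕ) :
    ∃ g0 g1 g2 g3 : ℂ,
      (Tm (a 0 0) (a 0 1) (a 0 2) (a 0 3) ^ k 0 * Tm (a 1 0) (a 1 1) (a 1 2) (a 1 3) ^ k 1 *
        Tm (a 2 0) (a 2 1) (a 2 2) (a 2 3) ^ k 2 * Tm (a 3 0) (a 3 1) (a 3 2) (a 3 3) ^ k 3)
        = Tm g0 g1 g2 g3 ∧
      g0 = a 0 0 ^ k 0 * a 1 0 ^ k 1 * a 2 0 ^ k 2 * a 3 0 ^ k 3 ∧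
      (g0 ≠ 0 → Fc g0 g1 g2 = ∑ i, k i • Fc (a i 0) (a i 1) (a i 2)) := by
  obtain ⟨e11, e12, e13, hA1, hF1⟩ := Tm_pow (a 0 0) (a 0 1) (a 0 2) (a 0 3) (k 0)
  obtain ⟨e21, e22, e23, hA2, hF2⟩ := Tm_pow (a 1 0) (a 1 1) (a 1 2) (a 1 3) (k 1)
  obtain ⟨e31, e32, e33, hA3, hF3⟩ := Tm_pow (a 2 0) (a 2 1) (a 2 2) (a 2 3) (k 2)
  obtain ⟨e41, e42, e43, hA4, hF4⟩ := Tm_pow (a 3 0) (a 3 1) (a 3 2) (a 3 3) (k 3)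
  refine ⟨_, _, _, _, by rw [hA1, hA2, hA3, hA4, Tm_mul, Tm_mul, Tm_mul], rfl, ?_⟩
  intro hg0
  obtain ⟨h123, h4⟩ := mul_ne_zero_iff.mp hg0
  obtain ⟨h12, h3⟩ := mul_ne_zero_iff.mp h123
  obtain ⟨h1, h2⟩ := mul_ne_zero_iff.mp h12
  rw [Fin.sum_univ_four,
    Fc_mul _ _ _ _ h123 h4, Fc_mul _ _ _ _ h12 h3, Fc_mul _ _ _ _ h1 h2,
    hF1 h1, hF2 h2, hF3 h3, hF4 h4]

lemma lattice_not_dense (w : Fin 4 → ℂ × ℂ) :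
    ¬ Dense {v : ℂ × ℂ | ∃ k : Fin 4 → ℕ, v = ∑ i, k i • w i} := by
  intro hD
  have hcard : Fintype.card (Fin 4) = Module.finrank ℝ (ℂ × ℂ) := by
    rw [Module.finrank_prod, Complex.finrank_real_complex]; rfl
  by_cases hli : LinearIndependent ℝ w
  · let b : Basis (Fin 4) ℝ (ℂ × ℂ) := basisOfLinearIndependentOfCardEqFinrank hli hcard
    have hb : ⇑b = w := coe_basisOfLinearIndependentOfCardEqFinrank _ _
    have hsub : {v : ℂ × ℂ | ∃ k : Fin 4 → ℕ, v = ∑ i, k i • w i}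
        ⊆ (Submodule.span ℤ (Set.range ⇑b) : Set (ℂ × ℂ)) := by
      rintro v ⟨k, rfl⟩
      exact Submodule.sum_mem _ fun i _ =>
        nsmul_mem (Submodule.subset_span (by rw [hb]; exact Set.mem_range_self i)) (k i)
    have hclosed : IsClosed (Submodule.span ℤ (Set.range ⇑b) : Set (ℂ × ℂ)) := by
      have : IsClosed ((Submodule.span ℤ (Set.range ⇑b)).toAddSubgroup : Set (ℂ × ℂ)) :=
        AddSubgroup.isClosed_of_discrete
      exact this
    have hmem : ((1:ℝ)/2) • b 0 ∈ Submodule.span ℤ (Set.range ⇑b) := by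
      have h1 : ((1:ℝ)/2) • b 0 ∈ closure {v : ℂ × ℂ | ∃ k : Fin 4 → ℕ, v = ∑ i, k i • w i} := by
        rw [hD.closure_eq]; trivial
      exact hclosed.closure_subset_iff.mpr hsub h1
    have h2 := (b.mem_span_iff_repr_mem ℤ _).mp hmem 0
    rw [_root_.map_smul, Basis.repr_self] at h2
    obtain ⟨m, hm⟩ := h2
    simp only [Finsupp.smul_apply, Finsupp.single_eq_same, smul_eq_mul, mul_one,
      algebraMap_int_eq, eq_intCast] at hm
    have hm2 : (2 : ℝ) * m = 1 := by rw [hm]; ring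
    have : (2 * m : ℤ) = (1 : ℤ) := by exact_mod_cast hm2
    omega
  · have hsub : {v : ℂ × ℂ | ∃ k : Fin 4 → ℕ, v = ∑ i, k i • w i}
        ⊆ (Submodule.span ℝ (Set.range w) : Set (ℂ × ℂ)) := by
      rintro v ⟨k, rfl⟩
      exact Submodule.sum_mem _ fun i _ =>
        nsmul_mem (Submodule.subset_span (Set.mem_range_self i)) (k i)
    have hclosed : IsClosed (Submodule.span ℝ (Set.range w) : Set (ℂ × ℂ)) :=
      (Submodule.span ℝ (Set.range w)).closed_of_finiteDimensional
    have htop : ⊤ ≤ Submodule.span ℝ (Set.range w) := by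
      intro v _
      have hv : v ∈ closure {v : ℂ × ℂ | ∃ k : Fin 4 → ℕ, v = ∑ i, k i • w i} := by
        rw [hD.closure_eq]; trivial
      exact hclosed.closure_subset_iff.mpr hsub hv
    exact hli (linearIndependent_of_top_le_span_of_card_eq_finrank htop hcard)

theorem toeplitz4_aux (a : Fin 4 → Fin 4 → ℂ) (x : Fin 4 → ℂ) :
    ¬ Dense {y : Fin 4 → ℂ | ∃ k : Fin 4 → ℕ,
        y = (Tm (a 0 0) (a 0 1) (a 0 2) (a 0 3) ^ k 0 * Tm (a 1 0) (a 1 1) (a 1 2) (a 1 3) ^ k 1 *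
             Tm (a 2 0) (a 2 1) (a 2 2) (a 2 3) ^ k 2 *
             Tm (a 3 0) (a 3 1) (a 3 2) (a 3 3) ^ k 3).mulVec x} := by
  intro hD
  set S := {y : Fin 4 → ℂ | ∃ k : Fin 4 → ℕ,
        y = (Tm (a 0 0) (a 0 1) (a 0 2) (a 0 3) ^ k 0 * Tm (a 1 0) (a 1 1) (a 1 2) (a 1 3) ^ k 1 *
             Tm (a 2 0) (a 2 1) (a 2 2) (a 2 3) ^ k 2 *
             Tm (a 3 0) (a 3 1) (a 3 2) (a 3 3) ^ k 3).mulVec x} with hSdef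
  by_cases hx3 : x 3 = 0
  · -- orbit lies in the closed hyperplane y 3 = 0
    have hsub : S ⊆ {y : Fin 4 → ℂ | y 3 = 0} := by
      rintro y ⟨k, rfl⟩
      obtain ⟨g0, g1, g2, g3, hP, -, -⟩ := rep a k
      rw [hP, Tm_mulVec]
      simp [hx3]
    have hclosed : IsClosed {y : Fin 4 → ℂ | y 3 = 0} :=
      isClosed_eq (continuous_apply 3) continuous_const
    have h1 : (fun _ => (1:ℂ)) ∈ {y : Fin 4 → ℂ | y 3 = 0} := by
      refine hclosed.closure_subset_iff.mpr hsub ?_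
      rw [hD.closure_eq]; trivial
    exact one_ne_zero h1
  · -- main case
    set w : Fin 4 → ℂ × ℂ := fun i => Fc (a i 0) (a i 1) (a i 2) with hw
    apply lattice_not_dense w
    rw [Metric.dense_iff]
    rintro ⟨u, v⟩ r hr
    set G : (Fin 4 → ℂ) → ℂ × ℂ := fun y =>
      ((y 2 * x 3 - y 3 * x 2)/(x 3 * y 3),
       (y 1 * x 3^2 - y 3 * x 3 * x 1 - (y 2 * x 3 - y 3 * x 2) * x 2)/(x 3^2 * y 3)
         - ((y 2 * x 3 - y 3 * x 2)/(x 3 * y 3))^2/2) with hGdef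
    set z : Fin 4 → ℂ := ![0, x 1 + u*x 2 + (v+u^2/2)*x 3, x 2 + u*x 3, x 3] with hzdef
    have hz3 : z 3 = x 3 := by simp [hzdef]
    have hz2 : z 2 = x 2 + u*x 3 := by simp [hzdef]
    have hz1 : z 1 = x 1 + u*x 2 + (v+u^2/2)*x 3 := by simp [hzdef]
    have hGz : G z = (u, v) := by
      rw [hGdef]
      simp only [hz1, hz2, hz3]
      have e1 : ((x 2 + u*x 3) * x 3 - x 3 * x 2)/(x 3 * x 3) = u := by field_simp; ring
      have e2 : ((x 1 + u*x 2 + (v+u^2/2)*x 3) * x 3^2 - x 3 * x 3 * x 1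
          - ((x 2 + u*x 3) * x 3 - x 3 * x 2) * x 2)/(x 3^2 * x 3) = v + u^2/2 := by
        field_simp; ring
      rw [Prod.mk.injEq, e1, e2]
      constructor
      · rfl
      · ring
    have hGcont : ContinuousAt G z := by
      have h3 : ContinuousAt (fun y : Fin 4 → ℂ => y 3) z := (continuous_apply 3).continuousAt
      have h2 : ContinuousAt (fun y : Fin 4 → ℂ => y 2) z := (continuous_apply 2).continuousAt
      have h1 : ContinuousAt (fun y : Fin 4 → ℂ => y 1) z := (continuous_apply 1).continuousAt
      have hd1 : (x 3 * z 3) ≠ 0 := by rw [hz3]; exact mul_ne_zero hx3 hx3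
      have hd2 : (x 3^2 * z 3) ≠ 0 := by rw [hz3]; exact mul_ne_zero (pow_ne_zero 2 hx3) hx3
      have hnum1 : ContinuousAt (fun y : Fin 4 → ℂ => y 2 * x 3 - y 3 * x 2) z :=
        (h2.mul continuousAt_const).sub (h3.mul continuousAt_const)
      have hfrac1 : ContinuousAt (fun y : Fin 4 → ℂ => (y 2 * x 3 - y 3 * x 2)/(x 3 * y 3)) z :=
        hnum1.div (continuousAt_const.mul h3) hd1
      have hfrac2 : ContinuousAt (fun y : Fin 4 → ℂ =>
          (y 1 * x 3^2 - y 3 * x 3 * x 1 - (y 2 * x 3 - y 3 * x 2) * x 2)/(x 3^2 * y 3)) z :=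
        (((h1.mul continuousAt_const).sub ((h3.mul continuousAt_const).mul continuousAt_const)).sub
          (hnum1.mul continuousAt_const)).div (continuousAt_const.mul h3) hd2
      exact ContinuousAt.prodMk hfrac1 (hfrac2.sub ((hfrac1.pow 2).div continuousAt_const two_ne_zero))
    obtain ⟨δ, hδpos, hδ⟩ := Metric.continuousAt_iff.mp hGcont r hr
    have hρpos : 0 < min δ ‖x 3‖ := lt_min hδpos (norm_pos_iff.mpr hx3)
    obtain ⟨s, hsball, hsS⟩ := Metric.dense_iff.mp hD z (min δ ‖x 3‖) hρpos
    obtain ⟨k, hk⟩ := hsS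
    obtain ⟨g0, g1, g2, g3, hP, hg0eq, hF⟩ := rep a k
    rw [hP, Tm_mulVec] at hk
    have hs3 : s 3 = g0 * x 3 := by rw [hk]; simp
    have hs2 : s 2 = g0 * x 2 + g1 * x 3 := by rw [hk]; simp
    have hs1 : s 1 = g0 * x 1 + g1 * x 2 + g2 * x 3 := by rw [hk]; simp
    have hsz : dist s z < min δ ‖x 3‖ := Metric.mem_ball.mp hsball
    have hs3ne : s 3 ≠ 0 := by
      intro h0
      have : dist (s 3) (z 3) ≤ dist s z := dist_le_pi_dist s z 3
      rw [h0, hz3, dist_zero_left] at this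
      exact absurd (lt_of_le_of_lt this (lt_of_lt_of_le hsz (min_le_right _ _))) (lt_irrefl _)
    have hg0 : g0 ≠ 0 := fun h => hs3ne (by rw [hs3, h, zero_mul])
    have hGs : G s = Fc g0 g1 g2 := by
      rw [hGdef]
      simp only [hs1, hs2, hs3]
      have e1 : ((g0 * x 2 + g1 * x 3) * x 3 - g0 * x 3 * x 2)/(x 3 * (g0 * x 3)) = g1/g0 := by
        field_simp; ring
      have e2 : ((g0 * x 1 + g1 * x 2 + g2 * x 3) * x 3^2 - g0 * x 3 * x 3 * x 1
          - ((g0 * x 2 + g1 * x 3) * x 3 - g0 * x 3 * x 2) * x 2)/(x 3^2 * (g0 * x 3))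
          = g2/g0 := by
        field_simp; ring
      rw [Fc, Prod.mk.injEq, e1, e2]
      exact ⟨rfl, rfl⟩
    have hdist : dist (G s) (u, v) < r := by
      rw [← hGz]
      exact hδ (lt_of_lt_of_le hsz (min_le_left _ _))
    refine ⟨G s, Metric.mem_ball.mpr hdist, ⟨k, ?_⟩⟩
    rw [hGs, hF hg0]

end Toep4Aux

theorem toeplitz4_not_hypercyclic
    (a : Fin 4 → Fin 4 → ℂ) (x : Fin 4 → ℂ) :
    ¬ Dense {y : Fin 4 → ℂ | ∃ k : Fin 4 → ℕ,
        y = ((!![a 0 0, a 0 1, a 0 2, a 0 3; 0, a 0 0, a 0 1, a 0 2;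
                 0, 0, a 0 0, a 0 1; 0, 0, 0, a 0 0]) ^ k 0 *
             (!![a 1 0, a 1 1, a 1 2, a 1 3; 0, a 1 0, a 1 1, a 1 2;
                 0, 0, a 1 0, a 1 1; 0, 0, 0, a 1 0]) ^ k 1 *
             (!![a 2 0, a 2 1, a 2 2, a 2 3; 0, a 2 0, a 2 1, a 2 2;
                 0, 0, a 2 0, a 2 1; 0, 0, 0, a 2 0]) ^ k 2 *
             (!![a 3 0, a 3 1, a 3 2, a 3 3; 0, a 3 0, a 3 1, a 3 2;
                 0, 0, a 3 0, a 3 1; 0, 0, 0, a 3 0]) ^ k 3).mulVec x} :=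
  toeplitz4_aux a x
end
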